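/- The cubes in the infinite Tribonacci word T are exactly of order T_n for n ≥ 5: a cube of order m occurs in T if and only if m = T_n for some n ≥ 5. -/

import Mathlib

/-- The Tribonacci morphism: 0 → 01, 1 → 02, 2 → 0. -/
def tribMap (c : ℕ) : List ℕ := if c = 0 then [0,1] else if c = 1 then [0,2] else [0]

/-- Iterates of the Tribonacci morphism on the word `0`. -/
def tribIter : ℕ → List ℕ
  | 0 => [0]
  | k+1 => (tribIter k).flatMap tribMap

/-- The infinite Tribonacci word, the fixed point starting with 0 of 0→01, 1→02, 2→0. -/
def tribWord (n : ℕ) : ℕ := (tribIter (n+1)).getD n 0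

/-- The Tribonacci numbers. -/
def trib : ℕ → ℕ
  | 0 => 0
  | 1 => 1
  | 2 => 1
  | n+3 => trib (n+2) + trib (n+1) + trib n

/- ### Part 1: basic lemmas -/

lemma tribIter_succ (k : ℕ) : tribIter (k+1) = (tribIter k).flatMap tribMap := rfl

lemma tribMap_head (c : ℕ) : (tribMap c).getD 0 0 = 0 := by
  unfold tribMap; split_ifs <;> rfl

lemma tribMap_len (c : ℕ) : (tribMap c).length = 1 ∨ (tribMap c).length = 2 := by
  unfold tribMap; split_ifs <;> simp

lemma tribMap_len_pos (c : ℕ) : 0 < (tribMap c).length := by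
  rcases tribMap_len c with h | h <;> omega

lemma tribMap_count0 (c : ℕ) : (tribMap c).count 0 = 1 := by
  unfold tribMap; split_ifs <;> rfl

lemma tribMap_count1 (c : ℕ) : (tribMap c).count 1 = if c = 0 then 1 else 0 := by
  unfold tribMap; split_ifs <;> simp_all

lemma tribMap_count2 (c : ℕ) : (tribMap c).count 2 = if c = 1 then 1 else 0 := by
  unfold tribMap; split_ifs <;> simp_all

lemma tribMap_len_eq (c : ℕ) :
    (tribMap c).length = 1 + (if c = 0 then 1 else 0) + (if c = 1 then 1 else 0) := by
  unfold tribMap; split_ifs <;> simp_all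

lemma count0_flatMap (l : List ℕ) : (l.flatMap tribMap).count 0 = l.length := by
  induction l with
  | nil => simp
  | cons a l ih =>
    simp only [List.flatMap_cons, List.count_append, ih, List.length_cons, tribMap_count0]
    omega

lemma count1_flatMap (l : List ℕ) : (l.flatMap tribMap).count 1 = l.count 0 := by
  induction l with
  | nil => simp
  | cons a l ih =>
    simp only [List.flatMap_cons, List.count_append, ih, List.count_cons, tribMap_count1,
      beq_iff_eq]
    split_ifs with h <;> omega

lemma len_flatMap (l : List ℕ) :
    (l.flatMap tribMap).length = l.length + l.count 0 + l.count 1 := by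
  induction l with
  | nil => simp
  | cons a l ih =>
    simp only [List.flatMap_cons, List.length_append, ih, List.length_cons, List.count_cons,
      tribMap_len_eq, beq_iff_eq]
    split_ifs <;> omega

lemma tribIter_ne_nil (k : ℕ) : tribIter k ≠ [] := by
  induction k with
  | zero => simp [tribIter]
  | succ k ih =>
    rw [tribIter_succ]
    intro h
    have := congrArg (List.count 0) h
    rw [count0_flatMap] at this
    simp at this
    exact ih this

lemma count0_tribIter_pos (k : ℕ) : 0 < (tribIter k).count 0 := by
  cases k with
  | zero => simp [tribIter]
  | succ j =>
    rw [tribIter_succ, count0_flatMap]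
    have := tribIter_ne_nil j
    exact List.length_pos_iff.mpr this

lemma len_tribIter (k : ℕ) : k < (tribIter k).length := by
  induction k with
  | zero => simp [tribIter]
  | succ k ih =>
    rw [tribIter_succ, len_flatMap]
    have := count0_tribIter_pos k
    omega

lemma tribIter_prefix_succ (k : ℕ) : tribIter k <+: tribIter (k+1) := by
  induction k with
  | zero => exact ⟨[1], rfl⟩
  | succ k ih =>
    obtain ⟨t, ht⟩ := ih
    refine ⟨t.flatMap tribMap, ?_⟩
    calc tribIter (k+1) ++ t.flatMap tribMap
        = (tribIter k).flatMap tribMap ++ t.flatMap tribMap := by rw [tribIter_succ]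
      _ = (tribIter k ++ t).flatMap tribMap := List.flatMap_append.symm
      _ = (tribIter (k+1)).flatMap tribMap := by rw [ht]
      _ = tribIter (k+1+1) := rfl

lemma tribIter_prefix {k k' : ℕ} (h : k ≤ k') : tribIter k <+: tribIter k' := by
  induction k' with
  | zero => cases Nat.le_zero.mp h; exact List.prefix_rfl
  | succ k' ih =>
    rcases Nat.lt_or_ge k (k'+1) with h' | h'
    · exact (ih (by omega)).trans (tribIter_prefix_succ k')
    · have : k = k' + 1 := by omega
      subst this; exact List.prefix_rfl

lemma tribWord_eq {K n : ℕ} (h : n < (tribIter K).length) :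
    tribWord n = (tribIter K).getD n 0 := by
  unfold tribWord
  have hn' : n < (tribIter (n+1)).length := by have := len_tribIter (n+1); omega
  rcases Nat.le_total K (n+1) with hk | hk
  · have hp := tribIter_prefix hk
    rw [List.getD_eq_getElem _ _ h, List.getD_eq_getElem _ _ hn']
    exact (hp.getElem h).symm
  · have hp := tribIter_prefix hk
    rw [List.getD_eq_getElem _ _ hn', List.getD_eq_getElem _ _ h]
    exact hp.getElem hn'

lemma tribWord_mem (n : ℕ) : tribWord n = 0 ∨ tribWord n = 1 ∨ tribWord n = 2 := by
  have hn : n < (tribIter (n+1)).length := by have := len_tribIter (n+1); omega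
  have hmem : tribWord n ∈ tribIter (n+1) := by
    unfold tribWord
    rw [List.getD_eq_getElem _ _ hn]
    exact List.getElem_mem _
  have mem : ∀ k, ∀ x ∈ tribIter k, x = 0 ∨ x = 1 ∨ x = 2 := by
    intro k
    induction k with
    | zero => intro x hx; simp [tribIter] at hx; tauto
    | succ k ih =>
      intro x hx
      rw [tribIter_succ] at hx
      rcases List.mem_flatMap.mp hx with ⟨c, _, hc⟩
      unfold tribMap at hc
      split_ifs at hc <;> simp_all <;> tauto
  exact mem _ _ hmem

/- ### Part 2: block decomposition -/

def Zb : ℕ → ℕ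
  | 0 => 0
  | j+1 => Zb j + (tribMap (tribWord j)).length

def decode (x : ℕ) : ℕ := if x = 1 then 0 else if x = 2 then 1 else 2

lemma listZ_drop (l : List ℕ) (j : ℕ) :
    (l.flatMap tribMap).drop (((l.take j).flatMap tribMap).length)
      = (l.drop j).flatMap tribMap := by
  have h := List.take_append_drop j l
  calc (l.flatMap tribMap).drop (((l.take j).flatMap tribMap).length)
      = ((l.take j ++ l.drop j).flatMap tribMap).drop
          (((l.take j).flatMap tribMap).length) := by rw [h]
    _ = _ := by rw [List.flatMap_append, List.drop_left]

lemma Zb_eq (K : ℕ) : ∀ j, j ≤ (tribIter K).length →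
    Zb j = (((tribIter K).take j).flatMap tribMap).length := by
  intro j
  induction j with
  | zero => simp [Zb]
  | succ j ih =>
    intro hj
    have hjl : j < (tribIter K).length := by omega
    have hW : tribWord j = (tribIter K)[j] := by
      rw [tribWord_eq hjl, List.getD_eq_getElem?_getD, List.getElem?_eq_getElem hjl]
      rfl
    show Zb j + (tribMap (tribWord j)).length = _
    rw [ih (by omega), List.take_succ, List.flatMap_append, List.length_append,
      List.getElem?_eq_getElem hjl]
    simp [hW]

lemma blockA (j r : ℕ) (hr : r < (tribMap (tribWord j)).length) :
    tribWord (Zb j + r) = (tribMap (tribWord j)).getD r 0 := by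
  have hK : j + 1 < (tribIter (j+1)).length := len_tribIter (j+1)
  set l := tribIter (j+1) with hl
  have hjl : j < l.length := by omega
  have hW : tribWord j = l[j] := by
    rw [tribWord_eq hjl, List.getD_eq_getElem?_getD, List.getElem?_eq_getElem hjl]; rfl
  have hdrop : (l.flatMap tribMap).drop (Zb j)
      = tribMap l[j] ++ (l.drop (j+1)).flatMap tribMap := by
    rw [Zb_eq (j+1) j hjl.le, listZ_drop, List.drop_eq_getElem_cons hjl, List.flatMap_cons]
  have hlen : Zb j + r < (l.flatMap tribMap).length := by
    have h1 := congrArg List.length hdrop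
    rw [List.length_drop, List.length_append] at h1
    rw [hW] at hr
    omega
  have hT2 : tribIter (j+2) = l.flatMap tribMap := tribIter_succ (j+1)
  have : tribWord (Zb j + r) = (l.flatMap tribMap).getD (Zb j + r) 0 := by
    rw [← hT2] at hlen ⊢
    exact tribWord_eq hlen
  rw [this, List.getD_eq_getElem?_getD, ← List.getElem?_drop, hdrop, List.getElem?_append,
    if_pos (by rw [hW] at hr; exact hr), ← List.getD_eq_getElem?_getD, hW]

lemma Zb_zero_at (j : ℕ) : tribWord (Zb j) = 0 := by
  have := blockA j 0 (tribMap_len_pos _)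
  rw [Nat.add_zero] at this
  rw [this, tribMap_head]

lemma Zb_step (j : ℕ) : Zb (j+1) = Zb j + 1 ∨ Zb (j+1) = Zb j + 2 := by
  show Zb j + (tribMap (tribWord j)).length = _ ∨ Zb j + (tribMap (tribWord j)).length = _
  rcases tribMap_len (tribWord j) with h | h <;> rw [h] <;> [left; right] <;> rfl

lemma Zb_mono : StrictMono Zb := by
  apply strictMono_nat_of_lt_succ
  intro j
  rcases Zb_step j with h | h <;> omega

lemma Zb_len1 (j : ℕ) (h : Zb (j+1) = Zb j + 1) : tribWord j = 2 := by
  have hlen : (tribMap (tribWord j)).length = 1 := by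
    have : Zb (j+1) = Zb j + (tribMap (tribWord j)).length := rfl
    omega
  rcases tribWord_mem j with hc | hc | hc
  · rw [hc] at hlen; simp [tribMap] at hlen
  · rw [hc] at hlen; simp [tribMap] at hlen
  · exact hc

lemma Zb_len2 (j : ℕ) (h : Zb (j+1) = Zb j + 2) :
    tribWord (Zb j + 1) = (if tribWord j = 0 then 1 else 2) ∧ tribWord j ≠ 2 := by
  have hlen : (tribMap (tribWord j)).length = 2 := by
    have : Zb (j+1) = Zb j + (tribMap (tribWord j)).length := rfl
    omega
  have hA := blockA j 1 (by omega)
  rcases tribWord_mem j with hc | hc | hc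
  · rw [hc] at hA ⊢; simp [tribMap] at hA; simp [hA]
  · rw [hc] at hA ⊢; simp [tribMap] at hA; simp [hA]
  · rw [hc] at hlen; simp [tribMap] at hlen

lemma Zb_decode (j : ℕ) : tribWord j = decode (tribWord (Zb j + 1)) := by
  rcases Zb_step j with h | h
  · have h2 := Zb_len1 j h
    have : tribWord (Zb j + 1) = 0 := by rw [← h]; exact Zb_zero_at (j+1)
    rw [this, h2]; rfl
  · obtain ⟨h1, h2⟩ := Zb_len2 j h
    rcases tribWord_mem j with hc | hc | hc
    · rw [hc] at h1; simp at h1; rw [h1, hc]; rfl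
    · rw [hc] at h1; simp at h1; rw [h1, hc]; rfl
    · exact absurd hc h2

lemma Zb_cover (p : ℕ) : ∃ j, Zb j ≤ p ∧ p < Zb (j+1) := by
  induction p with
  | zero =>
    refine ⟨0, Nat.le_refl _, ?_⟩
    calc (0:ℕ) = Zb 0 := rfl
      _ < Zb 1 := Zb_mono Nat.zero_lt_one
  | succ p ih =>
    obtain ⟨j, h1, h2⟩ := ih
    rcases Nat.lt_or_ge (p+1) (Zb (j+1)) with h | h
    · exact ⟨j, by omega, h⟩
    · refine ⟨j+1, h, ?_⟩
      rcases Zb_step (j+1) with h' | h' <;> omega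

lemma Zb_zero_start (p : ℕ) (h : tribWord p = 0) : ∃ j, Zb j = p := by
  obtain ⟨j, h1, h2⟩ := Zb_cover p
  rcases Nat.eq_or_lt_of_le h1 with he | hlt
  · exact ⟨j, he⟩
  · exfalso
    have hst : Zb (j+1) = Zb j + 2 := by
      rcases Zb_step j with h' | h' <;> omega
    have hp : p = Zb j + 1 := by omega
    obtain ⟨h3, _⟩ := Zb_len2 j hst
    rw [← hp] at h3
    split_ifs at h3 <;> omega

lemma Zb_nonzero (p : ℕ) (h : tribWord p ≠ 0) :
    ∃ j, p = Zb j + 1 ∧ Zb (j+1) = Zb j + 2 := by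
  obtain ⟨j, h1, h2⟩ := Zb_cover p
  have hne : Zb j ≠ p := fun he => h (he ▸ Zb_zero_at j)
  have hst : Zb (j+1) = Zb j + 2 := by
    rcases Zb_step j with h' | h' <;> omega
  exact ⟨j, by omega, hst⟩

lemma pred_zero (p : ℕ) (h : tribWord p ≠ 0) : 1 ≤ p ∧ tribWord (p-1) = 0 := by
  obtain ⟨j, h1, _⟩ := Zb_nonzero p h
  constructor
  · omega
  · have : p - 1 = Zb j := by omega
    rw [this]; exact Zb_zero_at j

lemma no000 (p : ℕ) :
    ¬(tribWord p = 0 ∧ tribWord (p+1) = 0 ∧ tribWord (p+2) = 0) := by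
  rintro ⟨h0, h1, h2⟩
  obtain ⟨j, hj⟩ := Zb_zero_start p h0
  obtain ⟨j', hj'⟩ := Zb_zero_start (p+1) h1
  obtain ⟨j'', hj''⟩ := Zb_zero_start (p+2) h2
  have e1 : j' = j + 1 := by
    have hlt : j < j' := by
      have : Zb j < Zb j' := by omega
      exact Zb_mono.lt_iff_lt.mp this
    have h1' : Zb (j+1) ≤ Zb j' := Zb_mono.le_iff_le.mpr (by omega)
    have h2' : Zb j < Zb (j+1) := Zb_mono (by omega)
    have he : Zb (j+1) = Zb j' := by omega
    have := Zb_mono.injective he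
    omega
  subst e1
  have e2 : j'' = j + 2 := by
    have hlt : j + 1 < j'' := by
      have : Zb (j+1) < Zb j'' := by omega
      exact Zb_mono.lt_iff_lt.mp this
    have h1' : Zb (j+2) ≤ Zb j'' := Zb_mono.le_iff_le.mpr (by omega)
    have h2' : Zb (j+1) < Zb (j+2) := Zb_mono (by omega)
    have he : Zb (j+2) = Zb j'' := by omega
    have := Zb_mono.injective he
    omega
  subst e2
  have t1 : tribWord j = 2 := Zb_len1 j (by omega)
  have t2 : tribWord (j+1) = 2 := by
    apply Zb_len1 (j+1)
    have hs := Zb_step (j+1)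
    simp only [show j+1+1 = j+2 from rfl] at hs ⊢
    omega
  have := pred_zero (j+1) (by omega)
  simp at this
  omega

lemma no3eq (p : ℕ) :
    ¬(tribWord p = tribWord (p+1) ∧ tribWord (p+1) = tribWord (p+2)) := by
  rintro ⟨h1, h2⟩
  rcases eq_or_ne (tribWord p) 0 with h0 | h0
  · exact no000 p ⟨h0, by omega, by omega⟩
  · have := pred_zero (p+1) (by omega)
    simp at this
    omega

/- ### Part 3: counts and the descent lemma -/

def cnt (c i m : ℕ) : ℕ := ((Finset.range m).filter (fun t => tribWord (i+t) = c)).card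

lemma cnt_zero (c i : ℕ) : cnt c i 0 = 0 := by simp [cnt]

lemma cnt_succ (c i m : ℕ) :
    cnt c i (m+1) = cnt c i m + if tribWord (i+m) = c then 1 else 0 := by
  unfold cnt
  rw [Finset.range_add_one, Finset.filter_insert]
  split_ifs with h
  · rw [Finset.card_insert_of_notMem (by simp)]
  · omega

lemma cnt_one (c i : ℕ) : cnt c i 1 = if tribWord i = c then 1 else 0 := by
  have := cnt_succ c i 0
  simpa [cnt_zero] using this

lemma cnt_add (c i a b : ℕ) : cnt c i (a+b) = cnt c i a + cnt c (i+a) b := by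
  induction b with
  | zero => simp [cnt_zero]
  | succ b ih =>
    have h1 : a + (b+1) = (a+b) + 1 := by omega
    rw [h1, cnt_succ, ih, cnt_succ]
    have : i + (a+b) = i + a + b := by omega
    rw [this]
    omega

lemma cnt_sum (i m : ℕ) : cnt 0 i m + cnt 1 i m + cnt 2 i m = m := by
  induction m with
  | zero => simp [cnt_zero]
  | succ m ih =>
    rw [cnt_succ, cnt_succ, cnt_succ]
    rcases tribWord_mem (i+m) with h | h | h <;> rw [h] <;> simp <;> omega

lemma cnt_eq_zero {c i m : ℕ} (h : cnt c i m = 0) :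
    ∀ t < m, tribWord (i+t) ≠ c := by
  intro t ht hc
  have : t ∈ (Finset.range m).filter (fun t => tribWord (i+t) = c) := by
    simp [ht, hc]
  unfold cnt at h
  rw [Finset.card_eq_zero] at h
  simp [h] at this

/-- Near-cube predicate: period `m` on a window of length `3m-1`. -/
def NC (i m : ℕ) : Prop := ∀ t, t + 1 < 2*m → tribWord (i+t) = tribWord (i+m+t)

lemma descent (m i : ℕ) (hm : 2 ≤ m) (h0 : tribWord i = 0) (H : NC i m) :
    ∃ j₀ m', 1 ≤ m' ∧ m' < m ∧ NC j₀ m' ∧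
      cnt 0 i m = m' ∧ cnt 1 i m = cnt 0 j₀ m' ∧ cnt 2 i m = cnt 1 j₀ m' := by
  have him : tribWord (i+m) = 0 := by
    have := H 0 (by omega)
    rw [Nat.add_zero, Nat.add_zero] at this
    omega
  obtain ⟨j₀, hj₀⟩ := Zb_zero_start i h0
  obtain ⟨j₁, hj₁⟩ := Zb_zero_start (i+m) him
  have hjlt : j₀ < j₁ := Zb_mono.lt_iff_lt.mp (by omega)
  set m' := j₁ - j₀ with hm'
  have hj₁' : j₁ = j₀ + m' := by omega
  have hm'pos : 1 ≤ m' := by omega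
  -- the first-copy key fact
  have key1 : ∀ r, r < m' → tribWord (Zb (j₀+r) + 1) = tribWord (Zb (j₀+r) + m + 1) := by
    intro r hr
    have hb : Zb (j₀+r) < i + m := by
      have : Zb (j₀+r) < Zb j₁ := Zb_mono (by omega)
      omega
    have hb2 : i ≤ Zb (j₀+r) := by
      have : Zb j₀ ≤ Zb (j₀+r) := Zb_mono.le_iff_le.mpr (by omega)
      omega
    have ht := H (Zb (j₀+r) + 1 - i) (by omega)
    have e1 : i + (Zb (j₀+r) + 1 - i) = Zb (j₀+r) + 1 := by omega
    have e2 : i + m + (Zb (j₀+r) + 1 - i) = Zb (j₀+r) + m + 1 := by omega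
    rw [e1, e2] at ht
    exact ht
  have Zeq1 : ∀ r, r ≤ m' → Zb (j₁+r) = Zb (j₀+r) + m := by
    intro r
    induction r with
    | zero => intro _; simpa using by omega
    | succ r ih =>
      intro hr
      have ihr := ih (by omega)
      have hlet : tribWord (j₁+r) = tribWord (j₀+r) := by
        rw [Zb_decode (j₁+r), Zb_decode (j₀+r), ihr]
        have hk := key1 r (by omega)
        have e : Zb (j₀+r) + m + 1 = Zb (j₀+r) + 1 + m := by omega
        rw [e] at hk
        rw [e, ← hk]
      have s1 : Zb (j₁+r+1) = Zb (j₁+r) + (tribMap (tribWord (j₁+r))).length := rfl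
      have s2 : Zb (j₀+r+1) = Zb (j₀+r) + (tribMap (tribWord (j₀+r))).length := rfl
      have e1 : j₁ + (r+1) = j₁ + r + 1 := by omega
      have e2 : j₀ + (r+1) = j₀ + r + 1 := by omega
      rw [e1, e2, s1, s2, ihr, hlet]
      omega
  have letter1 : ∀ r, r < m' → tribWord (j₁+r) = tribWord (j₀+r) := by
    intro r hr
    rw [Zb_decode (j₁+r), Zb_decode (j₀+r), Zeq1 r (by omega)]
    have hk := key1 r (by omega)
    have e : Zb (j₀+r) + m + 1 = Zb (j₀+r) + 1 + m := by omega
    rw [e] at hk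
    rw [e, ← hk]
  set j₂ := j₁ + m' with hj₂
  have hZj₂ : Zb j₂ = i + 2*m := by
    have := Zeq1 m' (le_refl m')
    have e : j₀ + m' = j₁ := by omega
    rw [hj₂, this, e, hj₁]
    omega
  -- bound for the second key fact
  have boundB : ∀ r, r + 2 ≤ m' → Zb (j₀+r) + 3 ≤ i + m := by
    intro r hr
    by_contra hcon
    push_neg at hcon
    have c1 : Zb (j₀+r) < Zb (j₀+r+1) := Zb_mono (by omega)
    have c2 : Zb (j₀+r+1) < Zb (j₀+r+2) := Zb_mono (by omega)
    have c3 : Zb (j₀+r+2) ≤ Zb (j₀+m') := Zb_mono.le_iff_le.mpr (by omega)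
    have hzm : Zb (j₀+m') = i + m := by rw [← hj₁']; exact hj₁
    have e0 : Zb (j₀+r) = i+m-2 := by omega
    have e1 : Zb (j₀+r+1) = i+m-1 := by omega
    have e2 : Zb (j₀+r+2) = i+m := by omega
    apply no000 (i+m-2)
    refine ⟨?_, ?_, ?_⟩
    · rw [← e0]; exact Zb_zero_at _
    · have : i+m-2+1 = i+m-1 := by omega
      rw [this, ← e1]; exact Zb_zero_at _
    · have : i+m-2+2 = i+m := by omega
      rw [this, ← e2]; exact Zb_zero_at _
  have key2 : ∀ r, r + 2 ≤ m' → tribWord (Zb (j₁+r) + 1) = tribWord (Zb (j₁+r) + m + 1) := by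
    intro r hr
    have hz1 : Zb (j₁+r) = Zb (j₀+r) + m := Zeq1 r (by omega)
    have hb := boundB r hr
    have hb2 : i ≤ Zb (j₀+r) := by
      have : Zb j₀ ≤ Zb (j₀+r) := Zb_mono.le_iff_le.mpr (by omega)
      omega
    have ht := H (Zb (j₁+r) + 1 - i) (by omega)
    have e1 : i + (Zb (j₁+r) + 1 - i) = Zb (j₁+r) + 1 := by omega
    have e2 : i + m + (Zb (j₁+r) + 1 - i) = Zb (j₁+r) + m + 1 := by omega
    rw [e1, e2] at ht
    exact ht
  have Zeq2 : ∀ r, r + 1 ≤ m' → Zb (j₂+r) = Zb (j₁+r) + m := by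
    intro r
    induction r with
    | zero =>
      intro _
      have e : j₁ + 0 = j₁ := by omega
      rw [Nat.add_zero, hZj₂, e, hj₁]
      omega
    | succ r ih =>
      intro hr
      have ihr := ih (by omega)
      have hlet : tribWord (j₂+r) = tribWord (j₁+r) := by
        rw [Zb_decode (j₂+r), Zb_decode (j₁+r), ihr]
        have hk := key2 r (by omega)
        have e : Zb (j₁+r) + m + 1 = Zb (j₁+r) + 1 + m := by omega
        rw [e] at hk
        rw [e, ← hk]
      have s1 : Zb (j₂+r+1) = Zb (j₂+r) + (tribMap (tribWord (j₂+r))).length := rfl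
      have s2 : Zb (j₁+r+1) = Zb (j₁+r) + (tribMap (tribWord (j₁+r))).length := rfl
      have e1 : j₂ + (r+1) = j₂ + r + 1 := by omega
      have e2 : j₁ + (r+1) = j₁ + r + 1 := by omega
      rw [e1, e2, s1, s2, ihr, hlet]
      omega
  have letter2 : ∀ r, r + 2 ≤ m' → tribWord (j₂+r) = tribWord (j₁+r) := by
    intro r hr
    rw [Zb_decode (j₂+r), Zb_decode (j₁+r), Zeq2 r (by omega)]
    have hk := key2 r (by omega)
    have e : Zb (j₁+r) + m + 1 = Zb (j₁+r) + 1 + m := by omega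
    rw [e] at hk
    rw [e, ← hk]
  -- upstairs near-cube
  have hNC : NC j₀ m' := by
    intro t ht
    rcases Nat.lt_or_ge t m' with h | h
    · have := letter1 t h
      rw [hj₁'] at this
      exact this.symm
    · have e1 : j₀ + t = j₁ + (t - m') := by omega
      have e2 : j₀ + m' + t = j₂ + (t - m') := by omega
      rw [e1, e2]
      exact (letter2 (t - m') (by omega)).symm
  -- counts
  have hcnt : ∀ r, r ≤ m' →
      cnt 0 i (Zb (j₀+r) - i) = r ∧
      cnt 1 i (Zb (j₀+r) - i) = cnt 0 j₀ r ∧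
      cnt 2 i (Zb (j₀+r) - i) = cnt 1 j₀ r := by
    intro r
    induction r with
    | zero =>
      intro _
      have e : Zb (j₀+0) - i = 0 := by
        have : j₀ + 0 = j₀ := rfl
        rw [this, hj₀]
        omega
      rw [e]
      simp [cnt_zero]
    | succ r ih =>
      intro hr
      obtain ⟨ih0, ih1, ih2⟩ := ih (by omega)
      have hge : i ≤ Zb (j₀+r) := by
        have : Zb j₀ ≤ Zb (j₀+r) := Zb_mono.le_iff_le.mpr (by omega)
        omega
      have hstep : Zb (j₀+r+1) = Zb (j₀+r) + (tribMap (tribWord (j₀+r))).length := rfl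
      have er : j₀ + (r+1) = j₀ + r + 1 := by omega
      have hz0 : tribWord (Zb (j₀+r)) = 0 := Zb_zero_at _
      have hgrow : ∀ c, cnt c i (Zb (j₀+r+1) - i)
          = cnt c i (Zb (j₀+r) - i) + cnt c (Zb (j₀+r)) (Zb (j₀+r+1) - Zb (j₀+r)) := by
        intro c
        have h1 : Zb (j₀+r) < Zb (j₀+r+1) := Zb_mono (by omega)
        have e3 : Zb (j₀+r+1) - i = (Zb (j₀+r) - i) + (Zb (j₀+r+1) - Zb (j₀+r)) := by omega
        have e4 : i + (Zb (j₀+r) - i) = Zb (j₀+r) := by omega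
        rw [e3, cnt_add, e4]
      rcases Zb_step (j₀+r) with hs | hs
      · have hup : tribWord (j₀+r) = 2 := Zb_len1 _ hs
        have hd : Zb (j₀+r+1) - Zb (j₀+r) = 1 := by omega
        refine ⟨?_, ?_, ?_⟩ <;>
          · rw [er, hgrow, hd, cnt_one, hz0]
            simp [cnt_succ, ih0, ih1, ih2, hup]
      · have hup := Zb_len2 _ hs
        have hd : Zb (j₀+r+1) - Zb (j₀+r) = 2 := by omega
        have hsecond : tribWord (Zb (j₀+r) + 1) = if tribWord (j₀+r) = 0 then 1 else 2 :=
          hup.1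
        have c2 : ∀ c, cnt c (Zb (j₀+r)) 2
            = (if (0:ℕ) = c then 1 else 0) + (if tribWord (Zb (j₀+r) + 1) = c then 1 else 0) := by
          intro c
          have h11 : (2:ℕ) = 1 + 1 := rfl
          rw [h11, cnt_add, cnt_one, cnt_one, hz0]
        rcases tribWord_mem (j₀+r) with hw | hw | hw
        · refine ⟨?_, ?_, ?_⟩ <;>
            · rw [er, hgrow, hd, c2, hsecond, hw]
              simp [cnt_succ, ih0, ih1, ih2, hw]
        · refine ⟨?_, ?_, ?_⟩ <;>
            · rw [er, hgrow, hd, c2, hsecond, hw]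
              simp [cnt_succ, ih0, ih1, ih2, hw]
        · exact absurd hw hup.2
  obtain ⟨c0, c1, c2⟩ := hcnt m' (le_refl m')
  have ez : Zb (j₀ + m') - i = m := by
    rw [← hj₁', hj₁]; omega
  rw [ez] at c0 c1 c2
  -- m' < m
  have hm'lt : m' < m := by
    by_contra hcon
    push_neg at hcon
    have hsum := cnt_sum i m
    have hc1 : cnt 1 i m = 0 := by omega
    have hc2 : cnt 2 i m = 0 := by omega
    have h1 : tribWord (i+1) = 0 := by
      rcases tribWord_mem (i+1) with h | h | h
      · exact h
      · exact absurd h (cnt_eq_zero hc1 1 (by omega))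
      · exact absurd h (cnt_eq_zero hc2 1 (by omega))
    have h2 : tribWord (i+2) = 0 := by
      rcases Nat.lt_or_ge 2 m with h' | h'
      · rcases tribWord_mem (i+2) with h | h | h
        · exact h
        · exact absurd h (cnt_eq_zero hc1 2 (by omega))
        · exact absurd h (cnt_eq_zero hc2 2 (by omega))
      · have e : i + 2 = i + m := by omega
        rw [e]
        exact him
    exact no000 i ⟨h0, h1, h2⟩
  exact ⟨j₀, m', hm'pos, hm'lt, hNC, c0, c1, c2⟩

/- ### Part 4: the abelian invariant -/

def vec : ℕ → ℕ × ℕ × ℕ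
  | 0 => (1,0,0)
  | k+1 => ((vec k).1 + (vec k).2.1 + (vec k).2.2, (vec k).1, (vec k).2.1)

def vsum (k : ℕ) : ℕ := (vec k).1 + (vec k).2.1 + (vec k).2.2

lemma vsum_rec (k : ℕ) : vsum (k+3) = vsum (k+2) + vsum (k+1) + vsum k := by
  simp only [vsum, vec]

lemma vsum_trib : ∀ k, vsum k = trib (k+2) := by
  intro k
  induction k using Nat.strong_induction_on with
  | _ k ih =>
    match k with
    | 0 => rfl
    | 1 => rfl
    | 2 => rfl
    | (k+3) =>
      rw [vsum_rec, ih (k+2) (by omega), ih (k+1) (by omega), ih k (by omega)]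
      show trib (k+4) + trib (k+3) + trib (k+2) = trib (k+5)
      rfl

lemma NC_shift {m i : ℕ} (hm : 1 ≤ m) (h : NC i m) (hne : tribWord i ≠ 0) :
    1 ≤ i ∧ NC (i-1) m ∧ ∀ c, cnt c (i-1) m = cnt c i m := by
  have h0 := h 0 (by omega)
  rw [Nat.add_zero, Nat.add_zero] at h0
  have hpm := pred_zero (i+m) (by omega)
  have hpi := pred_zero i hne
  obtain ⟨hi1, hiz⟩ := hpi
  obtain ⟨-, himz⟩ := hpm
  have himz' : tribWord (i+m-1) = 0 := himz
  refine ⟨hi1, ?_, ?_⟩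
  · intro t ht
    rcases Nat.eq_zero_or_pos t with rfl | htpos
    · rw [Nat.add_zero, Nat.add_zero]
      have e : i - 1 + m = i + m - 1 := by omega
      rw [e, himz', hiz]
    · have := h (t-1) (by omega)
      have e1 : i - 1 + t = i + (t-1) := by omega
      have e2 : i - 1 + m + t = i + m + (t-1) := by omega
      rw [e1, e2]
      exact this
  · intro c
    have e1 : cnt c (i-1) m = cnt c (i-1) 1 + cnt c i (m-1) := by
      have h' := cnt_add c (i-1) 1 (m-1)
      rw [show 1+(m-1) = m by omega, show i-1+1 = i by omega] at h'
      exact h'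
    have e2 : cnt c i m = cnt c i (m-1) + cnt c (i+(m-1)) 1 := by
      have h' := cnt_add c i (m-1) 1
      rw [show (m-1)+1 = m by omega] at h'
      exact h'
    rw [e1, e2, cnt_one, cnt_one, hiz]
    have e3 : i + (m-1) = i + m - 1 := by omega
    rw [e3, himz']
    omega

lemma phi : ∀ m, 1 ≤ m → ∀ i, NC i m →
    ∃ k, cnt 0 i m = (vec k).1 ∧ cnt 1 i m = (vec k).2.1 ∧ cnt 2 i m = (vec k).2.2 := by
  intro m
  induction m using Nat.strong_induction_on with
  | _ m ih =>
    intro hm i hnc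
    rcases Nat.lt_or_ge m 2 with hm2 | hm2
    · -- m = 1
      have hm1 : m = 1 := by omega
      subst hm1
      have h0 := hnc 0 (by omega)
      rw [Nat.add_zero, Nat.add_zero] at h0
      have hz : tribWord i = 0 := by
        by_contra hne
        have h2 := (pred_zero (i+1) (by rw [← h0]; exact hne)).2
        simp at h2
        exact hne h2
      refine ⟨0, ?_, ?_, ?_⟩ <;> rw [cnt_one] <;> simp [hz, vec]
    · -- m ≥ 2 : align then descend
      rcases eq_or_ne (tribWord i) 0 with hz | hne
      case inr =>
        obtain ⟨hi1, hnc', hcnt⟩ := NC_shift (by omega) hnc hne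
        have hz' : tribWord (i-1) = 0 := (pred_zero i hne).2
        obtain ⟨j₀, m', h1, h2, h3, c0, c1, c2⟩ := descent m (i-1) hm2 hz' hnc'
        obtain ⟨k, k0, k1, k2⟩ := ih m' h2 h1 j₀ h3
        have hsum : vsum k = m' := by
          have := cnt_sum j₀ m'
          rw [k0, k1, k2] at this
          exact this
        refine ⟨k+1, ?_, ?_, ?_⟩
        · rw [← hcnt 0, c0, ← hsum]; rfl
        · rw [← hcnt 1, c1, k0]; rfl
        · rw [← hcnt 2, c2, k1]; rfl
      case inl =>
        obtain ⟨j₀, m', h1, h2, h3, c0, c1, c2⟩ := descent m i hm2 hz hnc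
        obtain ⟨k, k0, k1, k2⟩ := ih m' h2 h1 j₀ h3
        have hsum : vsum k = m' := by
          have := cnt_sum j₀ m'
          rw [k0, k1, k2] at this
          exact this
        refine ⟨k+1, ?_, ?_, ?_⟩
        · rw [c0, ← hsum]; rfl
        · rw [c1, k0]; rfl
        · rw [c2, k1]; rfl

/- ### Part 5: no cubes of order 1, 2, 4 -/

def Cube (i m : ℕ) : Prop := ∀ t, t < 2*m → tribWord (i+t) = tribWord (i+m+t)

lemma Zb_next2 {j p : ℕ} (hp : Zb j = p) (h : tribWord (p+1) ≠ 0) : Zb (j+1) = p + 2 := by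
  rcases Zb_step j with hs | hs
  · exfalso
    apply h
    have : p + 1 = Zb (j+1) := by omega
    rw [this]
    exact Zb_zero_at _
  · omega

lemma decode_at {j p : ℕ} (hp : Zb j = p) : tribWord j = decode (tribWord (p+1)) := by
  rw [← hp]; exact Zb_decode j

lemma no_cube1 (i : ℕ) : ¬ Cube i 1 := by
  intro H
  have h0 := H 0 (by omega)
  have h1 := H 1 (by omega)
  simp only [Nat.add_zero, Nat.mul_one] at h0 h1
  exact no3eq i ⟨by simpa using h0, by
    have : i + 1 + 1 = i + 2 := by omega
    simpa [this] using h1⟩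

lemma no_cube2 (i : ℕ) : ¬ Cube i 2 := by
  intro H
  have e0 := H 0 (by omega); have e1 := H 1 (by omega)
  have e2 := H 2 (by omega); have e3 := H 3 (by omega)
  simp only [Nat.add_zero] at e0 e1 e2 e3
  rw [show i+2+1 = i+3 by omega] at e1
  rw [show i+2+2 = i+4 by omega] at e2
  rw [show i+2+3 = i+5 by omega] at e3
  have t2 : tribWord (i+2) = tribWord i := e0.symm
  have t3 : tribWord (i+3) = tribWord (i+1) := e1.symm
  have t4 : tribWord (i+4) = tribWord i := e2.symm.trans t2
  have t5 : tribWord (i+5) = tribWord (i+1) := e3.symm.trans t3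
  rcases eq_or_ne (tribWord i) (tribWord (i+1)) with hab | hab
  · exact no3eq i ⟨hab, by rw [t2, ← hab]⟩
  rcases eq_or_ne (tribWord i) 0 with ha | ha
  · -- a = 0, b ≠ 0
    have hb : tribWord (i+1) ≠ 0 := fun h => hab (ha.trans h.symm)
    obtain ⟨j, hj⟩ := Zb_zero_start i ha
    have hj1 : Zb (j+1) = i + 2 := Zb_next2 hj hb
    have hj2 : Zb (j+2) = i + 4 := by
      apply Zb_next2 hj1
      rw [show i+2+1 = i+3 by omega, t3]; exact hb
    apply no3eq j
    constructor
    · rw [decode_at hj, decode_at hj1, show i+2+1 = i+3 by omega, t3]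
    · rw [decode_at hj1, decode_at hj2, show i+2+1 = i+3 by omega,
        show i+4+1 = i+5 by omega, t3, t5]
  · -- a ≠ 0, b = 0
    have hb : tribWord (i+1) = 0 := by
      by_contra hb
      have := (pred_zero (i+1) hb).2
      simp at this
      exact ha this
    obtain ⟨hi1, hiz⟩ := pred_zero i ha
    obtain ⟨j, hj⟩ := Zb_zero_start (i-1) hiz
    have hj1 : Zb (j+1) = i + 1 := by
      have := Zb_next2 hj (by rw [show i-1+1 = i by omega]; exact ha)
      omega
    have hj2 : Zb (j+2) = i + 3 := by
      apply Zb_next2 hj1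
      rw [show i+1+1 = i+2 by omega, t2]; exact ha
    apply no3eq j
    constructor
    · rw [decode_at hj, decode_at hj1, show i-1+1 = i by omega,
        show i+1+1 = i+2 by omega, t2]
    · rw [decode_at hj1, decode_at hj2, show i+1+1 = i+2 by omega,
        show i+3+1 = i+4 by omega, t2, t4]

lemma cube_shift {i m : ℕ} (hm : 1 ≤ m) (H : Cube i m) (hne : tribWord i ≠ 0) :
    1 ≤ i ∧ Cube (i-1) m := by
  have h0 := H 0 (by omega)
  rw [Nat.add_zero, Nat.add_zero] at h0
  obtain ⟨hi1, hiz⟩ := pred_zero i hne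
  have himz : tribWord (i+m-1) = 0 := (pred_zero (i+m) (by omega)).2
  refine ⟨hi1, ?_⟩
  intro t ht
  rcases Nat.eq_zero_or_pos t with rfl | htpos
  · rw [Nat.add_zero, Nat.add_zero]
    have e : i - 1 + m = i + m - 1 := by omega
    rw [e, himz, hiz]
  · have := H (t-1) (by omega)
    have e1 : i - 1 + t = i + (t-1) := by omega
    have e2 : i - 1 + m + t = i + m + (t-1) := by omega
    rw [e1, e2]
    exact this

lemma decode1 : decode 1 = 0 := rfl
lemma decode2 : decode 2 = 1 := rfl

lemma no_cube4_aligned (i : ℕ) (hz : tribWord i = 0) : ¬ Cube i 4 := by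
  intro H
  have e0 := H 0 (by omega); have e1 := H 1 (by omega)
  have e2 := H 2 (by omega); have e3 := H 3 (by omega)
  have e4 := H 4 (by omega); have e5 := H 5 (by omega)
  have e6 := H 6 (by omega); have e7 := H 7 (by omega)
  simp only [Nat.add_zero] at e0 e1 e2 e3 e4 e5 e6 e7
  rw [show i+4+1 = i+5 by omega] at e1
  rw [show i+4+2 = i+6 by omega] at e2
  rw [show i+4+3 = i+7 by omega] at e3
  rw [show i+4+4 = i+8 by omega] at e4
  rw [show i+4+5 = i+9 by omega] at e5
  rw [show i+4+6 = i+10 by omega] at e6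
  rw [show i+4+7 = i+11 by omega] at e7
  have t4 : tribWord (i+4) = 0 := by rw [← e0, hz]
  have t5 : tribWord (i+5) = tribWord (i+1) := e1.symm
  have t6 : tribWord (i+6) = tribWord (i+2) := e2.symm
  have t7 : tribWord (i+7) = tribWord (i+3) := e3.symm
  have t8 : tribWord (i+8) = 0 := by rw [← e4, t4]
  have t9 : tribWord (i+9) = tribWord (i+1) := e5.symm.trans t5
  have t10 : tribWord (i+10) = tribWord (i+2) := e6.symm.trans t6
  have t11 : tribWord (i+11) = tribWord (i+3) := e7.symm.trans t7
  rcases eq_or_ne (tribWord (i+1)) 0 with hb | hb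
  · -- x = 00c0 : contradiction with 000 at i+3
    have hc : tribWord (i+2) ≠ 0 := by
      intro h
      exact no000 i ⟨hz, by rw [show i+(0+1) = i+1 by omega] at *; exact hb, by
        rw [show i+(0+2) = i+2 by omega] at *; exact h⟩
    have hd : tribWord (i+3) = 0 := by
      by_contra h
      have := (pred_zero (i+3) h).2
      simp only [show i+3-1 = i+2 by omega] at this
      exact hc this
    apply no000 (i+3)
    refine ⟨hd, ?_, ?_⟩
    · rw [show i+3+1 = i+4 by omega]; exact t4
    · rw [show i+3+2 = i+5 by omega, t5]; exact hb
  · have hc : tribWord (i+2) = 0 := by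
      by_contra h
      have := (pred_zero (i+2) h).2
      simp only [show i+2-1 = i+1 by omega] at this
      exact hb this
    rcases eq_or_ne (tribWord (i+3)) 0 with hd | hd
    · apply no000 (i+2)
      refine ⟨hc, ?_, ?_⟩
      · rw [show i+2+1 = i+3 by omega]; exact hd
      · rw [show i+2+2 = i+4 by omega]; exact t4
    -- now x = 0 b 0 d with b,d ≠ 0
    obtain ⟨j, hj⟩ := Zb_zero_start i hz
    have hj1 : Zb (j+1) = i+2 := Zb_next2 hj hb
    have hj2 : Zb (j+2) = i+4 := by
      apply Zb_next2 hj1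
      rw [show i+2+1 = i+3 by omega]; exact hd
    have hj3 : Zb (j+3) = i+6 := by
      apply Zb_next2 hj2
      rw [show i+4+1 = i+5 by omega, t5]; exact hb
    have hj4 : Zb (j+4) = i+8 := by
      apply Zb_next2 hj3
      rw [show i+6+1 = i+7 by omega, t7]; exact hd
    have hj5 : Zb (j+5) = i+10 := by
      apply Zb_next2 hj4
      rw [show i+8+1 = i+9 by omega, t9]; exact hb
    have w0 : tribWord j = decode (tribWord (i+1)) := decode_at hj
    have w1 : tribWord (j+1) = decode (tribWord (i+3)) := by
      rw [decode_at hj1, show i+2+1 = i+3 by omega]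
    have w2 : tribWord (j+2) = decode (tribWord (i+1)) := by
      rw [decode_at hj2, show i+4+1 = i+5 by omega, t5]
    have w3 : tribWord (j+3) = decode (tribWord (i+3)) := by
      rw [decode_at hj3, show i+6+1 = i+7 by omega, t7]
    have w4 : tribWord (j+4) = decode (tribWord (i+1)) := by
      rw [decode_at hj4, show i+8+1 = i+9 by omega, t9]
    have w5 : tribWord (j+5) = decode (tribWord (i+3)) := by
      rw [decode_at hj5, show i+10+1 = i+11 by omega, t11]
    have hbv : tribWord (i+1) = 1 ∨ tribWord (i+1) = 2 := by
      rcases tribWord_mem (i+1) with h | h | h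
      · exact absurd h hb
      · exact Or.inl h
      · exact Or.inr h
    have hdv : tribWord (i+3) = 1 ∨ tribWord (i+3) = 2 := by
      rcases tribWord_mem (i+3) with h | h | h
      · exact absurd h hd
      · exact Or.inl h
      · exact Or.inr h
    -- if the two decoded letters agree we get three equal letters upstairs
    rcases eq_or_ne (decode (tribWord (i+1))) (decode (tribWord (i+3))) with heq | hne2
    · exact no3eq j ⟨by rw [w0, w1, heq], by rw [w1, w2, heq]⟩
    rcases hbv with hbv | hbv <;> rcases hdv with hdv | hdv
    · exact hne2 (by rw [hbv, hdv])
    · -- b = 1, d = 2 : upstairs 0 1 0 1 0 1 starting at j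
      have u0 : tribWord j = 0 := by rw [w0, hbv, decode1]
      have u1 : tribWord (j+1) = 1 := by rw [w1, hdv, decode2]
      have u2 : tribWord (j+2) = 0 := by rw [w2, hbv, decode1]
      have u3 : tribWord (j+3) = 1 := by rw [w3, hdv, decode2]
      have u4 : tribWord (j+4) = 0 := by rw [w4, hbv, decode1]
      have u5 : tribWord (j+5) = 1 := by rw [w5, hdv, decode2]
      obtain ⟨h0, hh0⟩ := Zb_zero_start j u0
      have hh1 : Zb (h0+1) = j+2 := Zb_next2 hh0 (by rw [u1]; omega)
      have hh2 : Zb (h0+2) = j+4 := by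
        apply Zb_next2 hh1
        rw [show j+2+1 = j+3 by omega, u3]; omega
      apply no000 h0
      refine ⟨?_, ?_, ?_⟩
      · rw [decode_at hh0, u1, decode1]
      · rw [decode_at hh1, show j+2+1 = j+3 by omega, u3, decode1]
      · rw [decode_at hh2, show j+4+1 = j+5 by omega, u5, decode1]
    · -- b = 2, d = 1 : upstairs 1 0 1 0 1 0 starting at j
      have u0 : tribWord j = 1 := by rw [w0, hbv, decode2]
      have u1 : tribWord (j+1) = 0 := by rw [w1, hdv, decode1]
      have u2 : tribWord (j+2) = 1 := by rw [w2, hbv, decode2]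
      have u3 : tribWord (j+3) = 0 := by rw [w3, hdv, decode1]
      have u4 : tribWord (j+4) = 1 := by rw [w4, hbv, decode2]
      obtain ⟨hj1', hjz⟩ := pred_zero j (by rw [u0]; omega)
      obtain ⟨h0, hh0⟩ := Zb_zero_start (j-1) hjz
      have hh1 : Zb (h0+1) = j+1 := by
        have := Zb_next2 hh0 (by rw [show j-1+1 = j by omega, u0]; omega)
        omega
      have hh2 : Zb (h0+2) = j+3 := by
        apply Zb_next2 hh1
        rw [show j+1+1 = j+2 by omega, u2]; omega
      apply no000 h0
      refine ⟨?_, ?_, ?_⟩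
      · rw [decode_at hh0, show j-1+1 = j by omega, u0, decode1]
      · rw [decode_at hh1, show j+1+1 = j+2 by omega, u2, decode1]
      · rw [decode_at hh2, show j+3+1 = j+4 by omega, u4, decode1]
    · exact hne2 (by rw [hbv, hdv])

lemma no_cube4 (i : ℕ) : ¬ Cube i 4 := by
  intro H
  rcases eq_or_ne (tribWord i) 0 with hz | hne
  · exact no_cube4_aligned i hz H
  · obtain ⟨hi1, H'⟩ := cube_shift (by omega) H hne
    exact no_cube4_aligned (i-1) (pred_zero i hne).2 H'

/- ### Part 6: existence of cubes of all Tribonacci orders -/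

def tribX : ℕ → List ℕ
  | 0 => [0,1,0,2,0,1,0]
  | k+1 => (tribX k).flatMap tribMap

lemma infix_step {w : List ℕ} {K : ℕ} (h : w <:+: tribIter K) :
    w.flatMap tribMap <:+: tribIter (K+1) := by
  obtain ⟨s, t, hst⟩ := h
  exact ⟨s.flatMap tribMap, t.flatMap tribMap, by
    rw [tribIter_succ, ← hst, List.flatMap_append, List.flatMap_append]⟩

lemma tribX_infix : ∀ k, (tribX k ++ tribX k ++ tribX k) <:+: tribIter (8+k) := by
  intro k
  induction k with
  | zero =>
    show _ <:+: tribIter 8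
    decide
  | succ k ih =>
    have := infix_step ih
    rw [List.flatMap_append, List.flatMap_append] at this
    exact this

lemma trib_pos : ∀ n, 1 ≤ n → 0 < trib n := by
  intro n
  induction n using Nat.strong_induction_on with
  | _ n ih =>
    match n with
    | 0 => intro h; omega
    | 1 => intro _; decide
    | 2 => intro _; decide
    | (n+3) =>
      intro _
      have := ih (n+2) (by omega) (by omega)
      show 0 < trib (n+2) + trib (n+1) + trib n
      omega

lemma tribX_len : ∀ k, (tribX k).length = trib (k+5) ∧
    (tribX k).count 0 = trib (k+4) ∧ (tribX k).count 1 = trib (k+3) := by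
  intro k
  induction k with
  | zero => refine ⟨?_, ?_, ?_⟩ <;> decide
  | succ k ih =>
    obtain ⟨l, c0, c1⟩ := ih
    refine ⟨?_, ?_, ?_⟩
    · show ((tribX k).flatMap tribMap).length = _
      rw [len_flatMap, l, c0, c1]
      show trib (k+5) + trib (k+4) + trib (k+3) = trib (k+6)
      rfl
    · show ((tribX k).flatMap tribMap).count 0 = _
      rw [count0_flatMap, l]
    · show ((tribX k).flatMap tribMap).count 1 = _
      rw [count1_flatMap, c0]

lemma infix_window {w : List ℕ} {K : ℕ} (h : w <:+: tribIter K) :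
    ∃ i, ∀ t, t < w.length → tribWord (i+t) = w.getD t 0 := by
  obtain ⟨s, t, hst⟩ := h
  refine ⟨s.length, fun r hr => ?_⟩
  have hlen : s.length + r < (tribIter K).length := by
    rw [← hst]
    simp only [List.length_append]
    omega
  rw [tribWord_eq hlen, ← hst, List.getD_eq_getElem?_getD, List.getD_eq_getElem?_getD,
    List.append_assoc, List.getElem?_append, if_neg (by omega),
    show s.length + r - s.length = r by omega, List.getElem?_append, if_pos hr]

lemma cube_of_triple {w : List ℕ} (hw : 0 < w.length) {K : ℕ}
    (h : (w ++ w ++ w) <:+: tribIter K) : ∃ i, Cube i w.length := by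
  obtain ⟨i, hwin⟩ := infix_window h
  refine ⟨i, fun t ht => ?_⟩
  have l3 : (w ++ w ++ w).length = w.length + w.length + w.length := by
    rw [List.length_append, List.length_append]
  have h1 := hwin t (by omega)
  have h2 := hwin (w.length + t) (by omega)
  rw [show i + (w.length + t) = i + w.length + t by omega] at h2
  rw [h1, h2]
  rw [List.getD_eq_getElem?_getD, List.getD_eq_getElem?_getD]
  have left : (w ++ w ++ w)[t]? = (w ++ w)[t]? := by
    rw [List.getElem?_append, if_pos (by simp only [List.length_append]; omega)]
  have right : (w ++ w ++ w)[w.length + t]? = (w ++ w)[t]? := by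
    rw [List.append_assoc, List.getElem?_append, if_neg (by omega),
      show w.length + t - w.length = t by omega]
  rw [left, right]

lemma backward (n : ℕ) (hn : 5 ≤ n) : ∃ i, Cube i (trib n) := by
  obtain ⟨l, -, -⟩ := tribX_len (n-5)
  have hpos : 0 < (tribX (n-5)).length := by
    rw [l]
    exact trib_pos _ (by omega)
  obtain ⟨i, hc⟩ := cube_of_triple hpos (tribX_infix (n-5))
  rw [l, show n-5+5 = n by omega] at hc
  exact ⟨i, hc⟩


/-- The cubes in the Tribonacci word are exactly those of order `T_n` for `n ≥ 5`. -/
theorem tribWord_cube_orders (m : ℕ) (hm : 0 < m) :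
    (∃ i, ∀ t < 2 * m, tribWord (i + t) = tribWord (i + m + t)) ↔
      ∃ n ≥ 5, m = trib n := by
  constructor
  · rintro ⟨i, hi⟩
    have hcube : Cube i m := fun t ht => hi t ht
    have hnc : NC i m := fun t ht => hi t (by omega)
    obtain ⟨k, k0, k1, k2⟩ := phi m hm i hnc
    have hmv : m = vsum k := by
      have := cnt_sum i m
      rw [k0, k1, k2] at this
      rw [← this]
      rfl
    match k, hmv with
    | 0, hmv =>
      exfalso
      have h1 : m = 1 := hmv
      rw [h1] at hcube
      exact no_cube1 i hcube
    | 1, hmv =>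
      exfalso
      have h1 : m = 2 := hmv
      rw [h1] at hcube
      exact no_cube2 i hcube
    | 2, hmv =>
      exfalso
      have h1 : m = 4 := hmv
      rw [h1] at hcube
      exact no_cube4 i hcube
    | (k+3), hmv =>
      refine ⟨k+5, by omega, ?_⟩
      rw [hmv, vsum_trib]
  · rintro ⟨n, hn5, rfl⟩
    obtain ⟨i, hc⟩ := backward n hn5
    exact ⟨i, fun t ht => hc t ht⟩
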